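/- Consider an alternating scheme producing (w^{(l)}, θ^{(l)}) where θ^{(l)} maximizes (over the feasible set) min_k F_k(w^{(l-1)}, θ, t^{(l-1)}) with t^{(l-1)} = min_k γ_k(w^{(l-1)}, θ^{(l-1)}), where F_k(w,θ,t) = S_k(w,θ) − t·I_k(w,θ) with S_k, I_k > 0 and γ_k = S_k/I_k, and w^{(l)} maximizes min_k γ_k(w, θ^{(l)}). Then min_k γ_k(w^{(l)}, θ^{(l)}) ≥ min_k γ_k(w^{(l-1)}, θ^{(l-1)}); hence the sequence of objective values is nondecreasing, and if bounded above it converges. -/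
import Mathlib


theorem stmt_9 {W Θ K : Type*} [Fintype K] [Nonempty K]
    (S I : K → W → Θ → ℝ)
    (hS : ∀ k w θ, 0 < S k w θ) (hI : ∀ k w θ, 0 < I k w θ)
    (Wf : Set W) (Θf : Set Θ)
    (w : ℕ → W) (θ : ℕ → Θ)
    (hw : ∀ l, w l ∈ Wf) (hθ : ∀ l, θ l ∈ Θf)
    (hθmax : ∀ l, ∀ θ' ∈ Θf,
      (⨅ k, (S k (w l) θ' - (⨅ k', S k' (w l) (θ l) / I k' (w l) (θ l)) * I k (w l) θ'))
        ≤ ⨅ k, (S k (w l) (θ (l+1))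
            - (⨅ k', S k' (w l) (θ l) / I k' (w l) (θ l)) * I k (w l) (θ (l+1))))
    (hwmax : ∀ l, ∀ w' ∈ Wf,
      (⨅ k, S k w' (θ (l+1)) / I k w' (θ (l+1)))
        ≤ ⨅ k, S k (w (l+1)) (θ (l+1)) / I k (w (l+1)) (θ (l+1))) :
    Monotone (fun l => ⨅ k, S k (w l) (θ l) / I k (w l) (θ l)) ∧
    (BddAbove (Set.range fun l => ⨅ k, S k (w l) (θ l) / I k (w l) (θ l)) →
      ∃ a, Filter.Tendsto (fun l => ⨅ k, S k (w l) (θ l) / I k (w l) (θ l))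
        Filter.atTop (nhds a)) := by
  have hbdd : ∀ (f : K → ℝ), BddBelow (Set.range f) := fun f =>
    (Set.finite_range f).bddBelow
  have hmono : Monotone (fun l => ⨅ k, S k (w l) (θ l) / I k (w l) (θ l)) := by
    apply monotone_nat_of_le_succ
    intro l
    set t : ℝ := ⨅ k', S k' (w l) (θ l) / I k' (w l) (θ l) with ht
    -- step 1: F at θ l is ≥ 0
    have h1 : (0:ℝ) ≤ ⨅ k, (S k (w l) (θ l) - t * I k (w l) (θ l)) := by
      apply le_ciInf
      intro k
      have htk : t ≤ S k (w l) (θ l) / I k (w l) (θ l) := ciInf_le (hbdd _) k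
      nlinarith [mul_le_mul_of_nonneg_right htk (hI k (w l) (θ l)).le,
        (div_mul_cancel₀ (S k (w l) (θ l)) (hI k (w l) (θ l)).ne')]
    -- step 2: via hθmax, F at θ (l+1) ≥ 0, so γ at (w l, θ (l+1)) ≥ t
    have h2 : t ≤ ⨅ k, S k (w l) (θ (l+1)) / I k (w l) (θ (l+1)) := by
      have hF' : (0:ℝ) ≤ ⨅ k, (S k (w l) (θ (l+1)) - t * I k (w l) (θ (l+1))) :=
        h1.trans (hθmax l (θ l) (hθ l))
      apply le_ciInf
      intro k
      have hk : (0:ℝ) ≤ S k (w l) (θ (l+1)) - t * I k (w l) (θ (l+1)) :=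
        hF'.trans (ciInf_le (hbdd _) k)
      rw [le_div_iff₀ (hI k (w l) (θ (l+1)))]
      linarith
    exact h2.trans (hwmax l (w l) (hw l))
  refine ⟨hmono, fun hb => ?_⟩
  exact ⟨_, tendsto_atTop_ciSup hmono hb⟩
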